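/- (Boundary conditions under the Anyon–Fermi mapping.) Let $\kappa, \phi \in \mathbb{R}$, $L > 0$, and let $\chi^f: [0,L]^N \to \mathbb{C}$ be totally antisymmetric and satisfy in its first argument $\chi^f(0, z_2, \dots, z_N) = (-1)^{N-1} e^{-i\phi}\, \chi^f(L, z_2, \dots, z_N)$ for all $z_2,\dots,z_N \in (0,L)$. Let $\chi^a = A_\kappa\, B\, \chi^f$ and set $\overline\phi = \phi + \pi\kappa(N-1)$. Then for each $1 \le k \le N$ and all pairwise distinct $z_1,\dots,z_{k-1},z_{k+1},\dots,z_N \in (0,L)$: $\chi^a(z_1,\dots,z_{k-1}, 0, z_{k+1},\dots,z_N) = e^{i(2(k-1)\pi\kappa - \overline\phi)}\, \chi^a(z_1,\dots,z_{k-1}, L, z_{k+1},\dots,z_N)$. -/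

import Mathlib

/-- The statistics factor `A_κ(z₁,…,z_N) = exp(iπκ ∑_{j<k} ε(z_j - z_k)/2)`. -/
noncomputable def Afac (κ : ℝ) {N : ℕ} (z : Fin N → ℝ) : ℂ :=
  Complex.exp (Complex.I * Real.pi * κ *
    (∑ j : Fin N, ∑ k ∈ Finset.univ.filter (fun k => j < k), Real.sign (z j - z k)) / 2)

/-- The statistics factor `B(z₁,…,z_N) = ∏_{j>k} ε(z_j - z_k)`. -/
noncomputable def Bfac {N : ℕ} (z : Fin N → ℝ) : ℝ :=
  ∏ j : Fin N, ∏ k ∈ Finset.univ.filter (fun k => k < j), Real.sign (z j - z k)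

private lemma sign_sq {t : ℝ} (h : t ≠ 0) : Real.sign t * Real.sign t = 1 := by
  rcases h.lt_or_gt with h|h
  · rw [Real.sign_of_neg h]; norm_num
  · rw [Real.sign_of_pos h]; norm_num

/-- Boundary conditions under the Anyon–Fermi mapping: if the totally antisymmetric `χᶠ`
satisfies `χᶠ(0,…) = (-1)^{N-1} e^{-iφ} χᶠ(L,…)` in its first argument, then
`χᵃ = A_κ B χᶠ` satisfies, in its `k`-th argument (0-indexed `k`),
`χᵃ(…,0,…) = e^{i(2kπκ - φ̄)} χᵃ(…,L,…)` with `φ̄ = φ + πκ(N-1)`. -/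
theorem anyon_fermi_boundary_conditions (κ φ L : ℝ) (hL : 0 < L) (N : ℕ) (hN : 0 < N)
    (χf : (Fin N → ℝ) → ℂ)
    (hanti : ∀ (π : Equiv.Perm (Fin N)) (z : Fin N → ℝ),
      χf (z ∘ π) = ((Equiv.Perm.sign π : ℤ) : ℂ) * χf z)
    (hbc : ∀ z : Fin N → ℝ, (∀ i : Fin N, i ≠ ⟨0, hN⟩ → z i ∈ Set.Ioo 0 L) →
      χf (Function.update z ⟨0, hN⟩ 0)
        = (-1) ^ (N - 1) * Complex.exp (-(Complex.I * φ)) *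
            χf (Function.update z ⟨0, hN⟩ L))
    (k : Fin N) (z : Fin N → ℝ)
    (hz : ∀ i, i ≠ k → z i ∈ Set.Ioo 0 L)
    (hdist : ∀ i j, i ≠ k → j ≠ k → i ≠ j → z i ≠ z j) :
    Afac κ (Function.update z k 0) * (Bfac (Function.update z k 0) : ℂ) *
        χf (Function.update z k 0)
      = Complex.exp (Complex.I *
            (2 * (k : ℕ) * Real.pi * κ - ((φ : ℂ) + Real.pi * κ * ((N : ℂ) - 1)))) *
          (Afac κ (Function.update z k L) * (Bfac (Function.update z k L) : ℂ) *
            χf (Function.update z k L)) := by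
  set w := Function.update z k 0 with hw
  set v := Function.update z k L with hv
  have hwk : w k = 0 := Function.update_self _ _ _
  have hvk : v k = L := Function.update_self _ _ _
  have hw0 : ∀ j, j ≠ k → w j = z j := fun j h => Function.update_of_ne h _ _
  have hv0 : ∀ j, j ≠ k → v j = z j := fun j h => Function.update_of_ne h _ _
  have hkN : (k : ℕ) < N := k.is_lt
  -- cardinalities
  have hcIoi : (Finset.univ.filter (fun m => k < m)).card = N - 1 - (k : ℕ) := by
    have : Finset.univ.filter (fun m => k < m) = Finset.Ioi k := by ext m; simp
    rw [this, Fin.card_Ioi]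
  have hcIio : (Finset.univ.filter (fun m => m < k)).card = (k : ℕ) := by
    have : Finset.univ.filter (fun m => m < k) = Finset.Iio k := by ext m; simp
    rw [this, Fin.card_Iio]
  have hfe1 : (Finset.univ.erase k).filter (fun j => j < k)
      = Finset.univ.filter (fun j => j < k) := by
    ext m
    simp only [Finset.mem_filter, Finset.mem_erase, Finset.mem_univ, true_and, and_true]
    exact ⟨fun h => h.2, fun h => ⟨ne_of_lt h, h⟩⟩
  have hfe2 : (Finset.univ.erase k).filter (fun j => k < j)
      = Finset.univ.filter (fun j => k < j) := by
    ext m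
    simp only [Finset.mem_filter, Finset.mem_erase, Finset.mem_univ, true_and, and_true]
    exact ⟨fun h => h.2, fun h => ⟨ne_of_gt h, h⟩⟩
  -- the A factor
  have hSr : (∑ j : Fin N, ∑ m ∈ Finset.univ.filter (fun m => j < m), Real.sign (w j - w m))
      = (∑ j : Fin N, ∑ m ∈ Finset.univ.filter (fun m => j < m), Real.sign (v j - v m))
        + (4 * (k : ℝ) - 2 * ((N : ℝ) - 1)) := by
    have hD : (∑ j : Fin N, ∑ m ∈ Finset.univ.filter (fun m => j < m),
        (Real.sign (w j - w m) - Real.sign (v j - v m)))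
        = 4 * (k : ℝ) - 2 * ((N : ℝ) - 1) := by
      rw [← Finset.add_sum_erase _ _ (Finset.mem_univ k)]
      have gk : (∑ m ∈ Finset.univ.filter (fun m => k < m),
          (Real.sign (w k - w m) - Real.sign (v k - v m)))
          = -2 * ((N : ℝ) - 1 - (k : ℝ)) := by
        have h1 : ∀ m ∈ Finset.univ.filter (fun m => k < m),
            Real.sign (w k - w m) - Real.sign (v k - v m) = -2 := by
          intro m hm
          have hmk : m ≠ k := (Finset.mem_filter.mp hm).2.ne'
          have h2 := hz m hmk
          rw [hwk, hvk, hw0 m hmk, hv0 m hmk,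
            Real.sign_of_neg (by linarith [h2.1]), Real.sign_of_pos (by linarith [h2.2])]
          norm_num
        rw [Finset.sum_congr rfl h1, Finset.sum_const, hcIoi]
        have : ((N - 1 - (k : ℕ) : ℕ) : ℝ) = (N : ℝ) - 1 - (k : ℝ) := by
          have : (k : ℕ) + 1 ≤ N := hkN
          push_cast [Nat.cast_sub (by omega : (k:ℕ) ≤ N - 1), Nat.cast_sub (by omega : 1 ≤ N)]
          ring
        rw [nsmul_eq_mul, this]; ring
      have gj : ∀ j ∈ Finset.univ.erase k,
          (∑ m ∈ Finset.univ.filter (fun m => j < m),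
            (Real.sign (w j - w m) - Real.sign (v j - v m)))
          = if j < k then 2 else 0 := by
        intro j hj
        have hjk : j ≠ k := (Finset.mem_erase.mp hj).1
        have h2 := hz j hjk
        have h1 : ∀ m ∈ Finset.univ.filter (fun m => j < m),
            Real.sign (w j - w m) - Real.sign (v j - v m)
              = if m = k then 2 else 0 := by
          intro m hm
          by_cases hmk : m = k
          · subst hmk
            rw [hw0 j hjk, hv0 j hjk, hwk, hvk, if_pos rfl,
              Real.sign_of_pos (by linarith [h2.1]), Real.sign_of_neg (by linarith [h2.2])]
            norm_num
          · rw [hw0 j hjk, hv0 j hjk, hw0 m hmk, hv0 m hmk, if_neg hmk]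
            ring
        rw [Finset.sum_congr rfl h1, Finset.sum_ite_eq' _ k (fun _ => (2:ℝ))]
        simp
      rw [gk, Finset.sum_congr rfl gj, Finset.sum_ite, Finset.sum_const, Finset.sum_const,
        hfe1, hcIio]
      push_cast
      ring
    have hsplit : (∑ j : Fin N, ∑ m ∈ Finset.univ.filter (fun m => j < m),
        (Real.sign (w j - w m) - Real.sign (v j - v m)))
        = (∑ j : Fin N, ∑ m ∈ Finset.univ.filter (fun m => j < m), Real.sign (w j - w m))
          - (∑ j : Fin N, ∑ m ∈ Finset.univ.filter (fun m => j < m), Real.sign (v j - v m)) := by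
      rw [← Finset.sum_sub_distrib]
      exact Finset.sum_congr rfl fun j _ => Finset.sum_sub_distrib _ _
    rw [hsplit] at hD
    linarith
  have hA : Afac κ w = Complex.exp (Complex.I * Real.pi * κ *
      (2 * ((k : ℕ) : ℂ) - ((N : ℂ) - 1))) * Afac κ v := by
    unfold Afac
    rw [← Complex.exp_add]
    congr 1
    rw [hSr]
    push_cast
    ring
  -- the B factor
  have hvne : ∀ j m : Fin N, m < j → v j - v m ≠ 0 := by
    intro j m hm
    apply sub_ne_zero.mpr
    by_cases hjk : j = k
    · have hmk : m ≠ k := hjk ▸ ne_of_lt hm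
      rw [hjk, hvk, hv0 m hmk]
      exact fun h => absurd h.symm (ne_of_lt (hz m hmk).2)
    · by_cases hmk : m = k
      · subst hmk
        rw [hvk, hv0 j hjk]
        exact ne_of_lt (hz j hjk).2
      · rw [hv0 j hjk, hv0 m hmk]
        exact hdist j m hjk hmk (ne_of_gt hm)
  have hBv2 : Bfac v * Bfac v = 1 := by
    unfold Bfac
    rw [← Finset.prod_mul_distrib]
    apply Finset.prod_eq_one
    intro j _
    rw [← Finset.prod_mul_distrib]
    apply Finset.prod_eq_one
    intro m hm
    exact sign_sq (hvne j m (Finset.mem_filter.mp hm).2)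
  have hWV : Bfac w * Bfac v = (-1 : ℝ) ^ (N - 1) := by
    unfold Bfac
    rw [← Finset.prod_mul_distrib]
    have hinner : ∀ j : Fin N,
        (∏ m ∈ Finset.univ.filter (fun m => m < j), Real.sign (w j - w m))
          * (∏ m ∈ Finset.univ.filter (fun m => m < j), Real.sign (v j - v m))
        = ∏ m ∈ Finset.univ.filter (fun m => m < j),
            (Real.sign (w j - w m) * Real.sign (v j - v m)) :=
      fun j => Finset.prod_mul_distrib.symm
    rw [Finset.prod_congr rfl fun j _ => hinner j,
      ← Finset.mul_prod_erase _ _ (Finset.mem_univ k)]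
    have Pk : (∏ m ∈ Finset.univ.filter (fun m => m < k),
        (Real.sign (w k - w m) * Real.sign (v k - v m))) = (-1 : ℝ) ^ (k : ℕ) := by
      have h1 : ∀ m ∈ Finset.univ.filter (fun m => m < k),
          Real.sign (w k - w m) * Real.sign (v k - v m) = -1 := by
        intro m hm
        have hmk : m ≠ k := ne_of_lt (Finset.mem_filter.mp hm).2
        have h2 := hz m hmk
        rw [hwk, hvk, hw0 m hmk, hv0 m hmk,
          Real.sign_of_neg (by linarith [h2.1]), Real.sign_of_pos (by linarith [h2.2])]
        norm_num
      rw [Finset.prod_congr rfl h1, Finset.prod_const, hcIio]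
    have Pj : ∀ j ∈ Finset.univ.erase k,
        (∏ m ∈ Finset.univ.filter (fun m => m < j),
          (Real.sign (w j - w m) * Real.sign (v j - v m)))
        = if k < j then -1 else 1 := by
      intro j hj
      have hjk : j ≠ k := (Finset.mem_erase.mp hj).1
      have h2 := hz j hjk
      have h1 : ∀ m ∈ Finset.univ.filter (fun m => m < j),
          Real.sign (w j - w m) * Real.sign (v j - v m)
            = if m = k then -1 else 1 := by
        intro m hm
        by_cases hmk : m = k
        · subst hmk
          rw [hw0 j hjk, hv0 j hjk, hwk, hvk, if_pos rfl,
            Real.sign_of_pos (by linarith [h2.1]), Real.sign_of_neg (by linarith [h2.2])]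
          norm_num
        · have hmj : m < j := (Finset.mem_filter.mp hm).2
          rw [hw0 j hjk, hw0 m hmk, hv0 j hjk, hv0 m hmk, if_neg hmk]
          exact sign_sq (sub_ne_zero.mpr (hdist j m hjk hmk (ne_of_gt hmj)))
      rw [Finset.prod_congr rfl h1, Finset.prod_ite_eq' _ k (fun _ => (-1 : ℝ))]
      simp
    rw [Pk, Finset.prod_congr rfl Pj, Finset.prod_ite, Finset.prod_const, Finset.prod_const,
      hfe2, hcIoi, one_pow, mul_one, ← pow_add]
    congr 1
    omega
  have hB : Bfac w = (-1 : ℝ) ^ (N - 1) * Bfac v := by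
    calc Bfac w = Bfac w * (Bfac v * Bfac v) := by rw [hBv2]; ring
    _ = (Bfac w * Bfac v) * Bfac v := by ring
    _ = (-1 : ℝ) ^ (N - 1) * Bfac v := by rw [hWV]
  -- the fermionic wavefunction
  set k0 : Fin N := ⟨0, hN⟩ with hk0
  set σ : Equiv.Perm (Fin N) := Equiv.swap k0 k with hσ
  have hσ0 : σ k0 = k := Equiv.swap_apply_left _ _
  have hσne : ∀ i, i ≠ k0 → σ i ≠ k := by
    intro i h hc
    exact h (σ.injective (hc.trans hσ0.symm))
  have hcomp0 : w ∘ σ = Function.update (z ∘ σ) k0 0 := by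
    funext i
    by_cases h : i = k0
    · subst h
      simp only [Function.comp_apply, hσ0, hwk, Function.update_self]
    · simp only [Function.comp_apply, Function.update_of_ne h]
      exact hw0 _ (hσne i h)
  have hcompL : v ∘ σ = Function.update (z ∘ σ) k0 L := by
    funext i
    by_cases h : i = k0
    · subst h
      simp only [Function.comp_apply, hσ0, hvk, Function.update_self]
    · simp only [Function.comp_apply, Function.update_of_ne h]
      exact hv0 _ (hσne i h)
  have hzσ : ∀ i, i ≠ k0 → (z ∘ σ) i ∈ Set.Ioo 0 L := fun i h => hz _ (hσne i h)
  have hb := hbc (z ∘ σ) hzσ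
  rw [← hcomp0, ← hcompL, hanti σ w, hanti σ v] at hb
  have hsne : ((Equiv.Perm.sign σ : ℤ) : ℂ) ≠ 0 :=
    Int.cast_ne_zero.mpr (Units.ne_zero _)
  have hχ : χf w = (-1) ^ (N - 1) * Complex.exp (-(Complex.I * φ)) * χf v := by
    apply mul_left_cancel₀ hsne
    rw [hb]; ring
  -- assemble
  rw [hA, hB, hχ]
  push_cast
  have hsq : ((-1 : ℂ) ^ (N - 1)) * ((-1 : ℂ) ^ (N - 1)) = 1 := by
    rw [← pow_add]
    exact Even.neg_one_pow ⟨N - 1, rfl⟩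
  have hexp : Complex.exp (Complex.I * Real.pi * κ * (2 * ((k : ℕ) : ℂ) - ((N : ℂ) - 1)))
      * Complex.exp (-(Complex.I * φ))
      = Complex.exp (Complex.I *
          (2 * (k : ℕ) * Real.pi * κ - ((φ : ℂ) + Real.pi * κ * ((N : ℂ) - 1)))) := by
    rw [← Complex.exp_add]
    congr 1
    ring
  linear_combination (Afac κ v * (Bfac v : ℂ) * χf v
      * Complex.exp (Complex.I * Real.pi * κ * (2 * ((k : ℕ) : ℂ) - ((N : ℂ) - 1)))
      * Complex.exp (-(Complex.I * φ))) * hsq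
    + (Afac κ v * (Bfac v : ℂ) * χf v) * hexp
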